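/- For every integer b and nonnegative integers a with a > b ≥ 0: b + {a - b | 0} = {a | b}, i.e. the sum of the integer game b and the switch {a-b | 0} is equivalent to the switch {a | b}. -/

import Mathlib

namespace SetTheory

/-- Pre-games, as in the Mathlib of December 2024 (removed from Mathlib since). -/
inductive PGame : Type (u + 1)
  | mk : ∀ α β : Type u, (α → PGame) → (β → PGame) → PGame

namespace PGame

/-- The pre-game `0 = { | }`. -/
instance : Zero PGame.{u} :=
  ⟨⟨PEmpty, PEmpty, PEmpty.elim, PEmpty.elim⟩⟩

/-- Negation of a pre-game: swap Left and Right recursively. -/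
def neg : PGame.{u} → PGame.{u}
  | ⟨l, r, L, R⟩ => ⟨r, l, fun i => neg (R i), fun i => neg (L i)⟩

instance : Neg PGame.{u} :=
  ⟨neg⟩

/-- Disjunctive sum of pre-games. -/
noncomputable def add (x : PGame.{u}) : PGame.{u} → PGame.{u} :=
  PGame.rec (motive := fun _ => PGame.{u} → PGame.{u})
    (fun xl xr _ _ IHxl IHxr y =>
      PGame.rec (motive := fun _ => PGame.{u})
        (fun yl yr yL yR IHyl IHyr =>
          ⟨xl ⊕ yl, xr ⊕ yr, Sum.rec (fun i => IHxl i (mk yl yr yL yR)) IHyl,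
            Sum.rec (fun i => IHxr i (mk yl yr yL yR)) IHyr⟩) y) x

noncomputable instance : Add PGame.{u} :=
  ⟨add⟩

/-- The pair of relations `(x ≤ y, x ⧏ y)`, defined by simultaneous recursion. -/
noncomputable def leLF (x : PGame.{u}) : PGame.{u} → Prop × Prop :=
  PGame.rec (motive := fun _ => PGame.{u} → Prop × Prop)
    (fun _ _ _ _ IHl IHr y =>
      PGame.rec (motive := fun _ => Prop × Prop)
        (fun yl yr yL yR JHl JHr =>
          ((∀ i, (IHl i (mk yl yr yL yR)).2) ∧ ∀ j, (JHr j).2,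
            (∃ i, (JHl i).1) ∨ ∃ j, (IHr j (mk yl yr yL yR)).1)) y) x

instance : LE PGame.{u} :=
  ⟨fun x y => (leLF x y).1⟩

/-- Equivalence of pre-games: `x ≤ y ∧ y ≤ x`. -/
def Equiv (x y : PGame.{u}) : Prop :=
  x ≤ y ∧ y ≤ x

instance : HasEquiv PGame.{u} :=
  ⟨Equiv⟩

/-- The pre-game with Left options `L` and Right options `R`. -/
def ofLists (L R : List PGame.{u}) : PGame.{u} :=
  mk (ULift (Fin L.length)) (ULift (Fin R.length)) (fun i => L[i.down.1]) fun j => R[j.down.1]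

end PGame

end SetTheory


open SetTheory PGame
open scoped PGame

/-- The integer game `n`: `0 = { | }` and `n = {n-1 | }` for `n > 0`. -/
def natGame : ℕ → PGame
  | 0 => 0
  | n + 1 => PGame.ofLists [natGame n] []

/-- The integer game associated to an integer. -/
def intGame (a : ℤ) : PGame :=
  if 0 ≤ a then natGame a.toNat else -natGame (-a).toNat

namespace SetTheory.PGame

universe u

def LF (x y : PGame.{u}) : Prop := (leLF x y).2

def LeftMoves : PGame.{u} → Type u
  | mk l _ _ _ => l

def RightMoves : PGame.{u} → Type u
  | mk _ r _ _ => r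

def moveLeft : (x : PGame.{u}) → LeftMoves x → PGame.{u}
  | mk _ _ L _ => L

def moveRight : (x : PGame.{u}) → RightMoves x → PGame.{u}
  | mk _ _ _ R => R

theorem pg_le_iff (x y : PGame.{u}) :
    x ≤ y ↔ (∀ i, LF (x.moveLeft i) y) ∧ ∀ j, LF x (y.moveRight j) := by
  cases x; cases y; exact Iff.rfl

theorem pg_lf_iff (x y : PGame.{u}) :
    LF x y ↔ (∃ i, x ≤ y.moveLeft i) ∨ ∃ j, x.moveRight j ≤ y := by
  cases x; cases y; exact Iff.rfl

theorem pg_trans_aux (x y z : PGame.{u}) :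
    (x ≤ y → y ≤ z → x ≤ z) ∧ (x ≤ y → LF y z → LF x z) ∧ (LF x y → y ≤ z → LF x z) := by
  induction x generalizing y z with
  | mk xl xr xL xR IHxl IHxr =>
  induction y generalizing z with
  | mk yl yr yL yR IHyl IHyr =>
  induction z with
  | mk zl zr zL zR IHzl IHzr =>
  refine ⟨fun h1 h2 => ?_, fun h1 h2 => ?_, fun h1 h2 => ?_⟩
  · obtain ⟨h1l, h1r⟩ := (pg_le_iff _ _).1 h1
    obtain ⟨h2l, h2r⟩ := (pg_le_iff _ _).1 h2
    exact (pg_le_iff _ _).2 ⟨fun i => (IHxl i _ _).2.2 (h1l i) h2,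
      fun j => (IHzr j).2.1 h1 (h2r j)⟩
  · obtain ⟨h1l, h1r⟩ := (pg_le_iff _ _).1 h1
    rcases (pg_lf_iff _ _).1 h2 with ⟨i, h⟩ | ⟨j, h⟩
    · exact (pg_lf_iff _ _).2 (Or.inl ⟨i, (IHzl i).1 h1 h⟩)
    · exact (IHyr j _).2.2 (h1r j) h
  · obtain ⟨h2l, h2r⟩ := (pg_le_iff _ _).1 h2
    rcases (pg_lf_iff _ _).1 h1 with ⟨i, h⟩ | ⟨j, h⟩
    · exact (IHyl i _).2.1 h (h2l i)
    · exact (pg_lf_iff _ _).2 (Or.inr ⟨j, (IHxr j _ _).1 h h2⟩)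

theorem pg_le_trans {x y z : PGame.{u}} (h1 : x ≤ y) (h2 : y ≤ z) : x ≤ z :=
  (pg_trans_aux x y z).1 h1 h2

theorem pg_lf_of_le_moveLeft {x y : PGame.{u}} (i : y.LeftMoves) (h : x ≤ y.moveLeft i) :
    LF x y :=
  (pg_lf_iff x y).2 (Or.inl ⟨i, h⟩)

theorem pg_lf_of_moveRight_le {x y : PGame.{u}} (j : x.RightMoves) (h : x.moveRight j ≤ y) :
    LF x y :=
  (pg_lf_iff x y).2 (Or.inr ⟨j, h⟩)

theorem pg_add_le_iff (x y z : PGame.{u}) :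
    x + y ≤ z ↔ (∀ i, LF (x.moveLeft i + y) z) ∧ (∀ i, LF (x + y.moveLeft i) z) ∧
      ∀ j, LF (x + y) (z.moveRight j) := by
  rcases x with ⟨xl, xr, xL, xR⟩
  rcases y with ⟨yl, yr, yL, yR⟩
  rw [pg_le_iff]
  constructor
  · rintro ⟨h1, h2⟩
    exact ⟨fun i => h1 (Sum.inl i), fun i => h1 (Sum.inr i), h2⟩
  · rintro ⟨h1, h2, h3⟩
    refine ⟨fun s => ?_, h3⟩
    cases s with
    | inl i => exact h1 i
    | inr i => exact h2 i

theorem pg_le_add_iff (z x y : PGame.{u}) :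
    z ≤ x + y ↔ (∀ i, LF (z.moveLeft i) (x + y)) ∧ (∀ j, LF z (x.moveRight j + y)) ∧
      ∀ j, LF z (x + y.moveRight j) := by
  rcases x with ⟨xl, xr, xL, xR⟩
  rcases y with ⟨yl, yr, yL, yR⟩
  rw [pg_le_iff]
  constructor
  · rintro ⟨h1, h2⟩
    exact ⟨h1, fun j => h2 (Sum.inl j), fun j => h2 (Sum.inr j)⟩
  · rintro ⟨h1, h2, h3⟩
    refine ⟨h1, fun s => ?_⟩
    cases s with
    | inl j => exact h2 j
    | inr j => exact h3 j

theorem pg_lf_add_of_le_inl {x y z : PGame.{u}} (i : x.LeftMoves) (h : z ≤ x.moveLeft i + y) :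
    LF z (x + y) := by
  rcases x with ⟨xl, xr, xL, xR⟩
  rcases y with ⟨yl, yr, yL, yR⟩
  exact pg_lf_of_le_moveLeft (y := mk xl xr xL xR + mk yl yr yL yR) (Sum.inl i) h

theorem pg_lf_add_of_le_inr {x y z : PGame.{u}} (i : y.LeftMoves) (h : z ≤ x + y.moveLeft i) :
    LF z (x + y) := by
  rcases x with ⟨xl, xr, xL, xR⟩
  rcases y with ⟨yl, yr, yL, yR⟩
  exact pg_lf_of_le_moveLeft (y := mk xl xr xL xR + mk yl yr yL yR) (Sum.inr i) h

theorem pg_add_lf_of_inl {x y z : PGame.{u}} (j : x.RightMoves) (h : x.moveRight j + y ≤ z) :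
    LF (x + y) z := by
  rcases x with ⟨xl, xr, xL, xR⟩
  rcases y with ⟨yl, yr, yL, yR⟩
  exact pg_lf_of_moveRight_le (x := mk xl xr xL xR + mk yl yr yL yR) (Sum.inl j) h

theorem pg_add_lf_of_inr {x y z : PGame.{u}} (j : y.RightMoves) (h : x + y.moveRight j ≤ z) :
    LF (x + y) z := by
  rcases x with ⟨xl, xr, xL, xR⟩
  rcases y with ⟨yl, yr, yL, yR⟩
  exact pg_lf_of_moveRight_le (x := mk xl xr xL xR + mk yl yr yL yR) (Sum.inr j) h

theorem pg_add_zero (x : PGame.{u}) : x + 0 ≤ x ∧ x ≤ x + 0 := by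
  induction x with
  | mk xl xr xL xR IHl IHr =>
  constructor
  · exact (pg_add_le_iff _ _ _).2 ⟨fun i => pg_lf_of_le_moveLeft i (IHl i).1,
      fun i => PEmpty.elim i, fun j => pg_add_lf_of_inl j (IHr j).1⟩
  · exact (pg_le_add_iff _ _ _).2 ⟨fun i => pg_lf_add_of_le_inl i (IHl i).2,
      fun j => pg_lf_of_moveRight_le j (IHr j).2, fun j => PEmpty.elim j⟩

theorem ofLists_single_moveLeft (a : PGame.{u}) (r : List PGame.{u})
    (i : (ofLists [a] r).LeftMoves) : (ofLists [a] r).moveLeft i = a := by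
  change ULift (Fin [a].length) at i
  rcases i with ⟨⟨k, hk⟩⟩
  have h1 : [a].length = 1 := rfl
  have : k = 0 := by omega
  subst this
  rfl

theorem ofLists_single_moveRight (l : List PGame.{u}) (b : PGame.{u})
    (j : (ofLists l [b]).RightMoves) : (ofLists l [b]).moveRight j = b := by
  change ULift (Fin [b].length) at j
  rcases j with ⟨⟨k, hk⟩⟩
  have h1 : [b].length = 1 := rfl
  have : k = 0 := by omega
  subst this
  rfl

def ofLists_leftMove0 (a : PGame.{u}) (r : List PGame.{u}) : (ofLists [a] r).LeftMoves :=
  show ULift (Fin [a].length) from ⟨⟨0, by simp⟩⟩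

def ofLists_rightMove0 (l : List PGame.{u}) (b : PGame.{u}) : (ofLists l [b]).RightMoves :=
  show ULift (Fin [b].length) from ⟨⟨0, by simp⟩⟩

end SetTheory.PGame

theorem natGame_rightMoves_false (n : ℕ) (j : (natGame n).RightMoves) : False := by
  cases n with
  | zero => exact PEmpty.elim j
  | succ n => exact Fin.elim0 (ULift.down j)

theorem natGame_zero_leftMoves_false (i : (natGame 0).LeftMoves) : False := PEmpty.elim i

theorem natGame_moveLeft (n : ℕ) (i : (natGame (n + 1)).LeftMoves) :
    (natGame (n + 1)).moveLeft i = natGame n :=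
  ofLists_single_moveLeft (natGame n) [] i

def natGame_leftMove (n : ℕ) : (natGame (n + 1)).LeftMoves := ofLists_leftMove0 (natGame n) []

theorem natGame_le : ∀ {k l : ℕ}, k ≤ l → natGame k ≤ natGame l := by
  intro k
  induction k with
  | zero =>
    intro l _
    exact (pg_le_iff _ _).2 ⟨fun i => (natGame_zero_leftMoves_false i).elim,
      fun j => (natGame_rightMoves_false l j).elim⟩
  | succ k ih =>
    intro l h
    obtain ⟨l, rfl⟩ : ∃ l', l = l' + 1 := ⟨l - 1, by omega⟩
    refine (pg_le_iff _ _).2 ⟨fun i => ?_, fun j => (natGame_rightMoves_false _ j).elim⟩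
    rw [natGame_moveLeft]
    refine pg_lf_of_le_moveLeft (natGame_leftMove l) ?_
    rw [natGame_moveLeft]
    exact ih (by omega)

theorem natGame_lf {k l : ℕ} (h : k < l) : LF (natGame k) (natGame l) := by
  obtain ⟨l, rfl⟩ : ∃ l', l = l' + 1 := ⟨l - 1, by omega⟩
  refine pg_lf_of_le_moveLeft (natGame_leftMove l) ?_
  rw [natGame_moveLeft]
  exact natGame_le (by omega)

universe v

theorem natGame_add_aux (s : ℕ) : ∀ n m : ℕ, n + m = s →
    natGame.{v} n + natGame.{v} m ≤ natGame.{v} s ∧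
      natGame.{v} s ≤ natGame.{v} n + natGame.{v} m := by
  induction s using Nat.strong_induction_on with
  | _ s ih =>
  intro n m hs
  constructor
  · refine (pg_add_le_iff _ _ _).2 ⟨fun i => ?_, fun i => ?_,
      fun j => (natGame_rightMoves_false _ j).elim⟩
    · cases n with
      | zero => exact (natGame_zero_leftMoves_false i).elim
      | succ n =>
        rw [natGame_moveLeft]
        obtain ⟨s, rfl⟩ : ∃ s', s = s' + 1 := ⟨s - 1, by omega⟩
        refine pg_lf_of_le_moveLeft (natGame_leftMove s) ?_
        rw [natGame_moveLeft]
        exact (ih s (by omega) n m (by omega)).1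
    · cases m with
      | zero => exact (natGame_zero_leftMoves_false i).elim
      | succ m =>
        rw [natGame_moveLeft]
        obtain ⟨s, rfl⟩ : ∃ s', s = s' + 1 := ⟨s - 1, by omega⟩
        refine pg_lf_of_le_moveLeft (natGame_leftMove s) ?_
        rw [natGame_moveLeft]
        exact (ih s (by omega) n m (by omega)).1
  · refine (pg_le_add_iff _ _ _).2 ⟨fun i => ?_, fun j => (natGame_rightMoves_false _ j).elim,
      fun j => (natGame_rightMoves_false _ j).elim⟩
    cases s with
    | zero => exact (natGame_zero_leftMoves_false i).elim
    | succ s =>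
      rw [natGame_moveLeft]
      cases n with
      | succ n =>
        refine pg_lf_add_of_le_inl (natGame_leftMove n) ?_
        rw [natGame_moveLeft]
        exact (ih s (by omega) n m (by omega)).2
      | zero =>
        cases m with
        | zero => omega
        | succ m =>
          refine pg_lf_add_of_le_inr (natGame_leftMove m) ?_
          rw [natGame_moveLeft]
          exact (ih s (by omega) 0 m (by omega)).2

theorem key (n m : ℕ) :
    natGame n + PGame.ofLists [natGame m] [0] ≈
      PGame.ofLists [natGame (n + m)] [natGame n] := by
  have F : ∀ k, k < n → natGame k ≤ PGame.ofLists [natGame (n + m)] [natGame n] := by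
    intro k hk
    refine (pg_le_iff _ _).2 ⟨fun i => ?_, fun j => ?_⟩
    · cases k with
      | zero => exact (natGame_zero_leftMoves_false i).elim
      | succ k =>
        rw [natGame_moveLeft]
        refine pg_lf_of_le_moveLeft (ofLists_leftMove0 _ _) ?_
        rw [ofLists_single_moveLeft]
        exact natGame_le (by omega)
    · rw [ofLists_single_moveRight]
      exact natGame_lf hk
  show _ ≤ _ ∧ _ ≤ _
  constructor
  · refine (pg_add_le_iff _ _ _).2 ⟨fun i => ?_, fun i => ?_, fun j => ?_⟩
    · cases n with
      | zero => exact (natGame_zero_leftMoves_false i).elim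
      | succ n =>
        rw [natGame_moveLeft]
        refine pg_add_lf_of_inr (ofLists_rightMove0 _ _) ?_
        rw [ofLists_single_moveRight]
        exact pg_le_trans (pg_add_zero _).1 (F n (by omega))
    · rw [ofLists_single_moveLeft]
      refine pg_lf_of_le_moveLeft (ofLists_leftMove0 _ _) ?_
      rw [ofLists_single_moveLeft]
      exact (natGame_add_aux (n + m) n m rfl).1
    · rw [ofLists_single_moveRight]
      refine pg_add_lf_of_inr (ofLists_rightMove0 _ _) ?_
      rw [ofLists_single_moveRight]
      exact (pg_add_zero _).1
  · refine (pg_le_add_iff _ _ _).2 ⟨fun i => ?_, fun j => (natGame_rightMoves_false _ j).elim,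
      fun j => ?_⟩
    · rw [ofLists_single_moveLeft]
      refine pg_lf_add_of_le_inr (ofLists_leftMove0 _ _) ?_
      rw [ofLists_single_moveLeft]
      exact (natGame_add_aux (n + m) n m rfl).2
    · rw [ofLists_single_moveRight]
      refine pg_lf_of_moveRight_le (ofLists_rightMove0 _ _) ?_
      rw [ofLists_single_moveRight]
      exact (pg_add_zero _).2

/-- For integers `a > b ≥ 0`, `b + {a - b | 0}` is equivalent to the switch `{a | b}`. -/
theorem intGame_add_switch_equiv (a b : ℤ) (hab : b < a) (hb : 0 ≤ b) :
    intGame b + PGame.ofLists [intGame (a - b)] [0] ≈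
      PGame.ofLists [intGame a] [intGame b] := by
  have h1 : (0 : ℤ) ≤ a - b := by omega
  have h2 : (0 : ℤ) ≤ a := by omega
  rw [intGame, intGame, intGame, if_pos hb, if_pos h1, if_pos h2,
    show a.toNat = b.toNat + (a - b).toNat by omega]
  exact key b.toNat (a - b).toNat
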